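/- Let sigma' be the 16x16 matrix obtained from sigma by replacing q by q^-1, p by p^-1 and Y by -q^-1 Y throughout (note that (-q^-1 Y)^2 = p^2 - q^-2 + p^-2 q^-2 - 1, as required for the defining relation in the new parameters). Let P be the 16x16 matrix over R with entries P[(i,j),(k,l)] = (-1)^([k][l]) if i = l and j = k, and 0 otherwise, where the grading is [1] = [4] = 0 and [2] = [3] = 1. Then sigmabar = P sigma' P; that is, the inverse braiding at (q,p) is conjugate by the graded permutation matrix to the braiding at (q^-1, p^-1). -/

import Mathlib

open Matrix Kronecker
set_option maxRecDepth 2000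

/-- The elementary 16×16 matrix with entry `v` in row `(a,b)` and column `(c,d)`,
rows and columns indexed by `Fin 4 × Fin 4` (Kronecker product convention;
the index `i ∈ {1,…,4}` of the paper corresponds to `i - 1 ∈ Fin 4`). -/
def lgE {R : Type*} [CommRing R] (a b c d : Fin 4) (v : R) :
    Matrix (Fin 4 × Fin 4) (Fin 4 × Fin 4) R :=
  Matrix.single (a, b) (c, d) v

/-- The Links–Gould braiding `σ`, where `qi, pi` denote the inverses of `q, p`
and `Y ^ 2 = p⁻² - q² + p²q² - 1`. -/
def LGsigma {R : Type*} [CommRing R] (q p qi pi Y : R) :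
    Matrix (Fin 4 × Fin 4) (Fin 4 × Fin 4) R :=
  lgE 0 0 0 0 (pi ^ 2)
    + lgE 0 1 1 0 pi + lgE 1 0 0 1 pi + lgE 0 2 2 0 pi + lgE 2 0 0 2 pi
    + lgE 0 3 3 0 1 + lgE 3 0 0 3 1
    + lgE 1 0 1 0 (pi ^ 2 - 1) + lgE 2 0 2 0 (pi ^ 2 - 1)
    + lgE 1 1 1 1 (-1) + lgE 2 2 2 2 (-1)
    + lgE 1 2 1 2 (q ^ 2 - 1)
    + lgE 1 2 2 1 (-q) + lgE 2 1 1 2 (-q)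
    + lgE 1 2 3 0 (-(q * Y)) + lgE 3 0 1 2 (-(q * Y))
    + lgE 2 1 3 0 Y + lgE 3 0 2 1 Y
    + lgE 3 0 3 0 (Y ^ 2)
    + lgE 1 3 3 1 (p * q) + lgE 3 1 1 3 (p * q)
    + lgE 2 3 3 2 (p * q) + lgE 3 2 2 3 (p * q)
    + lgE 3 1 3 1 (p ^ 2 * q ^ 2 - 1) + lgE 3 2 3 2 (p ^ 2 * q ^ 2 - 1)
    + lgE 3 3 3 3 (p ^ 2 * q ^ 2)

/-- The matrix `σ̄` (the inverse braiding). -/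
def LGsigmabar {R : Type*} [CommRing R] (q p qi pi Y : R) :
    Matrix (Fin 4 × Fin 4) (Fin 4 × Fin 4) R :=
  lgE 0 0 0 0 (p ^ 2)
    + lgE 0 1 0 1 (p ^ 2 - 1) + lgE 0 2 0 2 (p ^ 2 - 1)
    + lgE 0 1 1 0 p + lgE 1 0 0 1 p + lgE 0 2 2 0 p + lgE 2 0 0 2 p
    + lgE 0 3 0 3 (Y ^ 2 * qi ^ 2)
    + lgE 0 3 1 2 (Y * qi) + lgE 1 2 0 3 (Y * qi)
    + lgE 0 3 2 1 (-(Y * qi ^ 2)) + lgE 2 1 0 3 (-(Y * qi ^ 2))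
    + lgE 0 3 3 0 1 + lgE 3 0 0 3 1
    + lgE 1 1 1 1 (-1) + lgE 2 2 2 2 (-1)
    + lgE 1 2 2 1 (-qi) + lgE 2 1 1 2 (-qi)
    + lgE 2 1 2 1 (qi ^ 2 - 1)
    + lgE 1 3 1 3 (pi ^ 2 * qi ^ 2 - 1) + lgE 2 3 2 3 (pi ^ 2 * qi ^ 2 - 1)
    + lgE 1 3 3 1 (pi * qi) + lgE 3 1 1 3 (pi * qi)
    + lgE 2 3 3 2 (pi * qi) + lgE 3 2 2 3 (pi * qi)
    + lgE 3 3 3 3 (pi ^ 2 * qi ^ 2)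

/-- The diagonal matrix `D = diag(p², -p²q², -p², p²q²)`, as a function on `Fin 4`. -/
def LGD {R : Type*} [CommRing R] (q p : R) : Fin 4 → R :=
  ![p ^ 2, -(p ^ 2 * q ^ 2), -(p ^ 2), p ^ 2 * q ^ 2]

/-- Quantum closure of the second strand of a two-strand tensor. -/
def lgcl2 {R : Type*} [CommRing R] (D : Fin 4 → R)
    (M : Matrix (Fin 4 × Fin 4) (Fin 4 × Fin 4) R) : Matrix (Fin 4) (Fin 4) R :=
  Matrix.of fun y x => ∑ a : Fin 4, M (y, a) (x, a) * D a

/-- Quantum closure of the second and third strands of a three-strand tensor. -/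
def lgcl3 {R : Type*} [CommRing R] (D : Fin 4 → R)
    (M : Matrix (Fin 4 × Fin 4 × Fin 4) (Fin 4 × Fin 4 × Fin 4) R) :
    Matrix (Fin 4) (Fin 4) R :=
  Matrix.of fun y x => ∑ a : Fin 4, ∑ b : Fin 4, M (y, a, b) (x, a, b) * D a * D b

/-- Quantum closure of the second, third and fourth strands of a four-strand tensor. -/
def lgcl4 {R : Type*} [CommRing R] (D : Fin 4 → R)
    (M : Matrix (Fin 4 × Fin 4 × Fin 4 × Fin 4) (Fin 4 × Fin 4 × Fin 4 × Fin 4) R) :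
    Matrix (Fin 4) (Fin 4) R :=
  Matrix.of fun y x =>
    ∑ a : Fin 4, ∑ b : Fin 4, ∑ c : Fin 4, M (y, a, b, c) (x, a, b, c) * D a * D b * D c

/-- `S ⊗ I₄` acting on the first two of three strands (Kronecker product,
reindexed along the canonical associativity equivalence). -/
def lgB1 {R : Type*} [CommRing R] (S : Matrix (Fin 4 × Fin 4) (Fin 4 × Fin 4) R) :
    Matrix (Fin 4 × Fin 4 × Fin 4) (Fin 4 × Fin 4 × Fin 4) R :=
  Matrix.reindex (Equiv.prodAssoc (Fin 4) (Fin 4) (Fin 4))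
    (Equiv.prodAssoc (Fin 4) (Fin 4) (Fin 4)) (S ⊗ₖ (1 : Matrix (Fin 4) (Fin 4) R))

/-- `I₄ ⊗ S` acting on the last two of three strands. -/
def lgB2 {R : Type*} [CommRing R] (S : Matrix (Fin 4 × Fin 4) (Fin 4 × Fin 4) R) :
    Matrix (Fin 4 × Fin 4 × Fin 4) (Fin 4 × Fin 4 × Fin 4) R :=
  (1 : Matrix (Fin 4) (Fin 4) R) ⊗ₖ S

/-- `S ⊗ I₁₆` acting on the first two of four strands. -/
def lgC1 {R : Type*} [CommRing R] (S : Matrix (Fin 4 × Fin 4) (Fin 4 × Fin 4) R) :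
    Matrix (Fin 4 × Fin 4 × Fin 4 × Fin 4) (Fin 4 × Fin 4 × Fin 4 × Fin 4) R :=
  Matrix.reindex (Equiv.prodAssoc (Fin 4) (Fin 4) (Fin 4 × Fin 4))
    (Equiv.prodAssoc (Fin 4) (Fin 4) (Fin 4 × Fin 4))
    (S ⊗ₖ (1 : Matrix (Fin 4 × Fin 4) (Fin 4 × Fin 4) R))

/-- `I₄ ⊗ S ⊗ I₄` acting on the middle two of four strands. -/
def lgC2 {R : Type*} [CommRing R] (S : Matrix (Fin 4 × Fin 4) (Fin 4 × Fin 4) R) :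
    Matrix (Fin 4 × Fin 4 × Fin 4 × Fin 4) (Fin 4 × Fin 4 × Fin 4 × Fin 4) R :=
  (1 : Matrix (Fin 4) (Fin 4) R) ⊗ₖ lgB1 S

/-- `I₁₆ ⊗ S` acting on the last two of four strands. -/
def lgC3 {R : Type*} [CommRing R] (S : Matrix (Fin 4 × Fin 4) (Fin 4 × Fin 4) R) :
    Matrix (Fin 4 × Fin 4 × Fin 4 × Fin 4) (Fin 4 × Fin 4 × Fin 4 × Fin 4) R :=
  (1 : Matrix (Fin 4) (Fin 4) R) ⊗ₖ lgB2 S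

/-- The `ℤ₂` grading `[1] = [4] = 0`, `[2] = [3] = 1` on the four basis states
(0-indexed). -/
def lgGrading : Fin 4 → ℕ := ![0, 1, 1, 0]

/-- The graded permutation matrix `P` with `P[(i,j),(k,l)] = (-1)^([k][l])` if
`i = l` and `j = k`, and `0` otherwise. -/
def lgP (R : Type*) [CommRing R] : Matrix (Fin 4 × Fin 4) (Fin 4 × Fin 4) R :=
  Matrix.of fun ij kl =>
    if ij.1 = kl.2 ∧ ij.2 = kl.1 then (-1 : R) ^ (lgGrading kl.1 * lgGrading kl.2) else 0

lemma lgP_mul' {R : Type*} [CommRing R] (M : Matrix (Fin 4 × Fin 4) (Fin 4 × Fin 4) R)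
    (i j : Fin 4) (kl : Fin 4 × Fin 4) :
    (lgP R * M) (i, j) kl = (-1 : R) ^ (lgGrading j * lgGrading i) * M (j, i) kl := by
  simp [Matrix.mul_apply, lgP, Fintype.sum_prod_type, ite_and, ite_mul]

lemma mul_lgP' {R : Type*} [CommRing R] (M : Matrix (Fin 4 × Fin 4) (Fin 4 × Fin 4) R)
    (ij : Fin 4 × Fin 4) (k l : Fin 4) :
    (M * lgP R) ij (k, l) = M ij (l, k) * (-1 : R) ^ (lgGrading k * lgGrading l) := by
  simp [Matrix.mul_apply, lgP, Fintype.sum_prod_type, ite_and, mul_ite, eq_comm]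

lemma lgE_apply {R : Type*} [CommRing R] (a b c d x y z w : Fin 4) (v : R) :
    lgE a b c d v (x, y) (z, w) = if a = x ∧ b = y ∧ c = z ∧ d = w then v else 0 := by
  simp [lgE, Matrix.single, and_assoc]

lemma P_conj_lgE {R : Type*} [CommRing R] (a b c d : Fin 4) (v : R) :
    lgP R * lgE a b c d v * lgP R
      = lgE b a d c ((-1 : R) ^ (lgGrading a * lgGrading b + lgGrading c * lgGrading d) * v) := by
  ext ⟨x, y⟩ ⟨z, w⟩
  rw [Matrix.mul_assoc, lgP_mul', mul_lgP', lgE_apply, lgE_apply]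
  by_cases h : b = x ∧ a = y ∧ d = z ∧ c = w
  · obtain ⟨rfl, rfl, rfl, rfl⟩ := h
    simp [pow_add]
    ring
  · rw [if_neg h, if_neg (by tauto)]
    simp

lemma lgE_smul {R : Type*} [CommRing R] (a b c d : Fin 4) (v : R) :
    lgE a b c d v = v • Matrix.single (a, b) (c, d) (1 : R) := by
  simp [lgE, Matrix.smul_single]

/-- `σ̄ = P σ' P`, where `σ'` is `σ` with `q ↦ q⁻¹`, `p ↦ p⁻¹`,
`Y ↦ -q⁻¹Y`: the inverse braiding at `(q,p)` is conjugate by the graded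
permutation matrix to the braiding at `(q⁻¹, p⁻¹)`. -/
theorem LG_sigmabar_eq_P_sigma_inv_P (R : Type*) [CommRing R] (q p qi pi Y : R)
    (hq : q * qi = 1) (hp : p * pi = 1)
    (hY : Y ^ 2 = pi ^ 2 - q ^ 2 + p ^ 2 * q ^ 2 - 1) :
    LGsigmabar q p qi pi Y = lgP R * LGsigma qi pi q p (-(qi * Y)) * lgP R := by
  rw [LGsigma, LGsigmabar]
  simp only [Matrix.add_mul, Matrix.mul_add, P_conj_lgE]
  simp only [lgGrading, Matrix.cons_val_zero, Matrix.cons_val_one, Matrix.head_cons,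
    Matrix.cons_val_two, Matrix.tail_cons, Matrix.cons_val_three, Matrix.head_fin_const,
    Nat.mul_zero, Nat.zero_mul, Nat.mul_one, Nat.one_mul, Nat.add_zero, Nat.zero_add,
    pow_zero, pow_one, one_mul, neg_one_mul, neg_neg]
  simp only [lgE_smul]
  module
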